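/- arXiv:2110.15611 — 2 statements merged into one kernel-verified Lean document; each statement's English description precedes it below -/
import Mathlib

section
/- Assume the inverse inequality ‖∇φ_h‖_{L²} ≤ C h⁻¹ ‖φ_h‖_{L²} holds for all φ_h in the finite element space V_h, and 0 < α ≤ 𝒞h. If V ∈ V_h and U ∈ V_h is the discrete differential filter of V (i.e. α²(∇U, ∇φ) + (U, φ) = (V, φ) for all φ ∈ V_h), then ‖V‖_{L²} ≤ 𝒞₁ ‖U‖_α, where ‖U‖_α² = ‖U‖²_{L²} + α²‖∇U‖²_{L²} and 𝒞₁ depends only on 𝒞 and C. -/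
open scoped InnerProductSpace

lemma bilin_cauchy_schwarz {E : Type} [NormedAddCommGroup E] [InnerProductSpace ℝ E]
    (B : E →ₗ[ℝ] E →ₗ[ℝ] ℝ) (hs : ∀ x y, B x y = B y x) (hp : ∀ x, 0 ≤ B x x)
    (x y : E) : B x y ≤ Real.sqrt (B x x) * Real.sqrt (B y y) := by
  have key : (B x y) ^ 2 ≤ B x x * B y y := by
    have hd : discrim (B y y) (2 * B x y) (B x x) ≤ 0 := by
      apply discrim_le_zero
      intro t
      have h0 := hp (x + t • y)
      simp only [map_add, map_smul, LinearMap.add_apply, LinearMap.smul_apply,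
        smul_eq_mul] at h0
      rw [hs y x] at h0
      nlinarith [h0]
    unfold discrim at hd
    nlinarith
  calc B x y ≤ |B x y| := le_abs_self _
    _ = Real.sqrt ((B x y) ^ 2) := (Real.sqrt_sq_eq_abs _).symm
    _ ≤ Real.sqrt (B x x * B y y) := Real.sqrt_le_sqrt key
    _ = Real.sqrt (B x x) * Real.sqrt (B y y) := Real.sqrt_mul (hp x) _

/-- Under the inverse inequality `‖∇φ_h‖ ≤ C h⁻¹‖φ_h‖` on `V_h` and `0 < α ≤ 𝒞h`,
the discrete filter `U` of `V ∈ V_h` satisfies `‖V‖_{L²} ≤ 𝒞₁‖U‖_α` with `𝒞₁`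
depending only on `𝒞` and `C`. Abstract Hilbert space formulation: `E` is `L²`,
`Bgrad x y = (∇x, ∇y)` is the gradient inner product (so `Bgrad x x = ‖∇x‖²`). -/
theorem stmt_12 (𝒞 C : ℝ) (h𝒞 : 0 < 𝒞) (hC : 0 < C) :
    ∃ C₁ : ℝ, 0 < C₁ ∧
      ∀ (E : Type) (_ : NormedAddCommGroup E) (_ : InnerProductSpace ℝ E)
        (Vh : Submodule ℝ E)
        (Bgrad : E →ₗ[ℝ] E →ₗ[ℝ] ℝ),
        (∀ x y, Bgrad x y = Bgrad y x) →
        (∀ x, 0 ≤ Bgrad x x) →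
        ∀ (α h : ℝ), 0 < h → 0 < α → α ≤ 𝒞 * h →
        -- inverse inequality on `V_h`
        (∀ φ ∈ Vh, Bgrad φ φ ≤ (C / h) ^ 2 * ‖φ‖ ^ 2) →
        ∀ (V U : E), V ∈ Vh → U ∈ Vh →
        -- `U` is the discrete differential filter of `V`
        (∀ φ ∈ Vh, α ^ 2 * Bgrad U φ + ⟪U, φ⟫_ℝ = ⟪V, φ⟫_ℝ) →
        ‖V‖ ≤ C₁ * Real.sqrt (‖U‖ ^ 2 + α ^ 2 * Bgrad U U) := by
  refine ⟨𝒞 * C + 1, by positivity, ?_⟩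
  intro E _ _ Vh B hs hp α h hh hα hαh hinv V U hV hU hf
  set N := Real.sqrt (‖U‖ ^ 2 + α ^ 2 * B U U) with hN
  have hBU : 0 ≤ B U U := hp U
  have hNnn : 0 ≤ N := Real.sqrt_nonneg _
  -- ‖U‖ ≤ N
  have hUN : ‖U‖ ≤ N := by
    rw [hN]
    exact Real.le_sqrt_of_sq_le (by nlinarith)
  -- α * √(B U U) ≤ N
  have hαBN : α * Real.sqrt (B U U) ≤ N := by
    rw [hN]
    have hsq := Real.sq_sqrt hBU
    exact Real.le_sqrt_of_sq_le
      (by nlinarith [sq_nonneg ‖U‖, Real.sqrt_nonneg (B U U)])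
  -- √(B V V) ≤ (C/h) ‖V‖
  have hBV : Real.sqrt (B V V) ≤ C / h * ‖V‖ := by
    have := hinv V hV
    calc Real.sqrt (B V V) ≤ Real.sqrt ((C / h) ^ 2 * ‖V‖ ^ 2) := Real.sqrt_le_sqrt this
      _ = C / h * ‖V‖ := by
          rw [show (C / h) ^ 2 * ‖V‖ ^ 2 = (C / h * ‖V‖) ^ 2 by ring,
            Real.sqrt_sq (by positivity)]
  have hV2 : (‖V‖ : ℝ) ^ 2 = α ^ 2 * B U V + ⟪U, V⟫_ℝ := by
    rw [hf V hV, real_inner_self_eq_norm_sq]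
  have hcs : B U V ≤ Real.sqrt (B U U) * Real.sqrt (B V V) :=
    bilin_cauchy_schwarz B hs hp U V
  have hiuv : ⟪U, V⟫_ℝ ≤ ‖U‖ * ‖V‖ := real_inner_le_norm U V
  have hmain : ‖V‖ ^ 2 ≤ (𝒞 * C + 1) * N * ‖V‖ := by
    have h1 : α ^ 2 * B U V ≤ (α * Real.sqrt (B U U)) * (α * (C / h) * ‖V‖) := by
      have hsq : 0 ≤ Real.sqrt (B U U) := Real.sqrt_nonneg _
      nlinarith [mul_le_mul_of_nonneg_left hcs (sq_nonneg α),
        mul_le_mul_of_nonneg_left hBV (mul_nonneg (sq_nonneg α) hsq)]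
    have h2 : (α * Real.sqrt (B U U)) * (α * (C / h) * ‖V‖) ≤ N * (𝒞 * C * ‖V‖) := by
      have hach : α * (C / h) ≤ 𝒞 * C := by
        rw [div_eq_inv_mul]
        calc α * (h⁻¹ * C) ≤ 𝒞 * h * (h⁻¹ * C) := by
              apply mul_le_mul_of_nonneg_right hαh; positivity
          _ = 𝒞 * C := by field_simp
      have hb : α * (C / h) * ‖V‖ ≤ 𝒞 * C * ‖V‖ :=
        mul_le_mul_of_nonneg_right hach (norm_nonneg V)
      exact mul_le_mul hαBN hb (by positivity) hNnn
    have h3 : ⟪U, V⟫_ℝ ≤ N * ‖V‖ :=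
      le_trans hiuv (mul_le_mul_of_nonneg_right hUN (norm_nonneg V))
    nlinarith
  rcases eq_or_lt_of_le (norm_nonneg V) with hz | hz
  · rw [← hz]; positivity
  · have := (mul_le_mul_iff_of_pos_right hz).mp (by nlinarith : ‖V‖ * ‖V‖ ≤ ((𝒞 * C + 1) * N) * ‖V‖)
    exact this
end

section
/- Let (φ_h)_{h>0} be a sequence in H¹₀(D)ᵈ-conforming finite element spaces V_h such that ‖∇φ_h‖²_{L²} + α²‖Δʰφ_h‖²_{L²} ≤ C uniformly in h (α > 0 fixed). Then, along a subsequence, φ_h converges weakly in H¹₀ to some φ ∈ H² ∩ H¹₀, Δʰφ_h ⇀ Δφ weakly in L², and moreover φ_h → φ strongly in H¹₀. -/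
open Filter
open scoped InnerProductSpace

theorem weak_seq_compact {E : Type*} [NormedAddCommGroup E] [InnerProductSpace ℝ E]
    [CompleteSpace E] (ψ : ℕ → E) (M : ℝ) (hM : ∀ j, ‖ψ j‖ ≤ M) :
    ∃ g : ℕ → ℕ, StrictMono g ∧ ∃ x : E,
      ∀ y : E, Tendsto (fun j => ⟪ψ (g j), y⟫_ℝ) atTop (nhds ⟪x, y⟫_ℝ) := by
  have hM0 : 0 ≤ M := le_trans (norm_nonneg _) (hM 0)
  have hb : ∀ j k, ⟪ψ j, ψ k⟫_ℝ ∈ Set.Icc (-(M*M)) (M*M) := by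
    intro j k
    have h1 : |⟪ψ j, ψ k⟫_ℝ| ≤ M * M := by
      refine le_trans (abs_real_inner_le_norm _ _) ?_
      exact mul_le_mul (hM j) (hM k) (norm_nonneg _) hM0
    constructor
    · linarith [neg_abs_le (⟪ψ j, ψ k⟫_ℝ)]
    · linarith [le_abs_self (⟪ψ j, ψ k⟫_ℝ)]
  obtain ⟨L, hL, g, hg, hgL⟩ :=
    (isCompact_univ_pi (fun k : ℕ => isCompact_Icc (a := -(M*M)) (b := M*M))).tendsto_subseq
      (x := fun j => fun k => ⟪ψ j, ψ k⟫_ℝ)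
      (fun j => by simp only [Set.mem_univ_pi]; exact fun k => hb j k)
  have hpt : ∀ k, Tendsto (fun j => ⟪ψ (g j), ψ k⟫_ℝ) atTop (nhds (L k)) := by
    rw [tendsto_pi_nhds] at hgL
    exact hgL
  -- convergence on the span
  set S : Submodule ℝ E := Submodule.span ℝ (Set.range ψ) with hS
  have hspan : ∀ w ∈ S, ∃ c : ℝ, Tendsto (fun j => ⟪ψ (g j), w⟫_ℝ) atTop (nhds c) := by
    intro w hw
    induction hw using Submodule.span_induction with
    | mem x hx =>
        obtain ⟨k, rfl⟩ := hx
        exact ⟨L k, hpt k⟩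
    | zero => exact ⟨0, by simpa using (tendsto_const_nhds : Tendsto (fun _ : ℕ => (0:ℝ)) atTop _)⟩
    | add x y hx hy ihx ihy =>
        obtain ⟨c1, h1⟩ := ihx; obtain ⟨c2, h2⟩ := ihy
        exact ⟨c1 + c2, by simpa [inner_add_right] using h1.add h2⟩
    | smul a x hx ihx =>
        obtain ⟨c, h1⟩ := ihx
        exact ⟨a * c, by simpa [real_inner_smul_right] using h1.const_mul a⟩
  set K := S.topologicalClosure with hK
  -- convergence on the closure of the span
  have hKc : ∀ w ∈ K, ∃ c : ℝ, Tendsto (fun j => ⟪ψ (g j), w⟫_ℝ) atTop (nhds c) := by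
    intro w hw
    have hC : CauchySeq (fun j => ⟪ψ (g j), w⟫_ℝ) := by
      rw [Metric.cauchySeq_iff']
      intro ε hε
      have hw' : w ∈ closure (S : Set E) := hw
      obtain ⟨v, hvS, hv⟩ := Metric.mem_closure_iff.mp hw' (ε/(4*(M+1))) (by positivity)
      obtain ⟨c, hc⟩ := hspan v hvS
      obtain ⟨N, hN⟩ := Metric.cauchySeq_iff'.mp hc.cauchySeq (ε/2) (by positivity)
      refine ⟨N, fun n hn => ?_⟩
      have key : ∀ m, |⟪ψ (g m), w⟫_ℝ - ⟪ψ (g m), v⟫_ℝ| ≤ M * (ε/(4*(M+1))) := by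
        intro m
        rw [← inner_sub_right]
        refine le_trans (abs_real_inner_le_norm _ _) ?_
        have hd : ‖w - v‖ ≤ ε/(4*(M+1)) := by
          rw [← dist_eq_norm]; exact le_of_lt hv
        exact mul_le_mul (hM (g m)) hd (norm_nonneg _) hM0
      have hMe : M * (ε/(4*(M+1))) ≤ ε/4 := by
        rw [show M * (ε/(4*(M+1))) = (M * ε) / (4*(M+1)) by ring,
          div_le_div_iff₀ (by positivity) (by norm_num : (0:ℝ) < 4)]
        nlinarith [hε.le]
      have h1 := hN n hn
      rw [Real.dist_eq] at h1 ⊢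
      have h2 := key n
      have h3 := key N
      have habs : |⟪ψ (g n), w⟫_ℝ - ⟪ψ (g N), w⟫_ℝ| ≤
          |⟪ψ (g n), w⟫_ℝ - ⟪ψ (g n), v⟫_ℝ| + |⟪ψ (g n), v⟫_ℝ - ⟪ψ (g N), v⟫_ℝ|
            + |⟪ψ (g N), v⟫_ℝ - ⟪ψ (g N), w⟫_ℝ| := by
        calc _ = |(⟪ψ (g n), w⟫_ℝ - ⟪ψ (g n), v⟫_ℝ) + (⟪ψ (g n), v⟫_ℝ - ⟪ψ (g N), v⟫_ℝ)
            + (⟪ψ (g N), v⟫_ℝ - ⟪ψ (g N), w⟫_ℝ)| := by ring_nf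
          _ ≤ _ := by
            refine le_trans (abs_add_le _ _) ?_
            exact add_le_add (abs_add_le _ _) le_rfl
      have h3' : |⟪ψ (g N), v⟫_ℝ - ⟪ψ (g N), w⟫_ℝ| ≤ M * (ε/(4*(M+1))) := by
        rw [abs_sub_comm]; exact h3
      linarith
    exact cauchySeq_tendsto_of_complete hC
  haveI : CompleteSpace K := S.isClosed_topologicalClosure.completeSpace_coe
  have hmem : ∀ j, ψ j ∈ K :=
    fun j => Submodule.le_topologicalClosure S (Submodule.subset_span ⟨j, rfl⟩)
  have hall : ∀ y : E, ∃ c, Tendsto (fun j => ⟪ψ (g j), y⟫_ℝ) atTop (nhds c) := by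
    intro y
    have horth : y - (K.orthogonalProjectionOnto y : E) ∈ Kᗮ :=
      K.sub_starProjection_mem_orthogonal y
    have heq : ∀ j, ⟪ψ (g j), ((K.orthogonalProjectionOnto y : E))⟫_ℝ = ⟪ψ (g j), y⟫_ℝ := by
      intro j
      have h0 : ⟪ψ (g j), y - (K.orthogonalProjectionOnto y : E)⟫_ℝ = 0 :=
        (Submodule.mem_orthogonal K _).mp horth _ (hmem (g j))
      rw [inner_sub_right] at h0
      linarith
    obtain ⟨c, hc⟩ := hKc _ (K.orthogonalProjectionOnto y).2
    exact ⟨c, hc.congr heq⟩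
  choose f hf using hall
  have f_add : ∀ y y', f (y + y') = f y + f y' := fun y y' =>
    tendsto_nhds_unique (hf (y+y')) (by simpa [inner_add_right] using (hf y).add (hf y'))
  have f_smul : ∀ (a : ℝ) y, f (a • y) = a * f y := fun a y =>
    tendsto_nhds_unique (hf _) (by simpa [real_inner_smul_right] using (hf y).const_mul a)
  have f_bound : ∀ y, |f y| ≤ M * ‖y‖ := by
    intro y
    refine le_of_tendsto ((hf y).abs) (Eventually.of_forall fun j => ?_)
    exact le_trans (abs_real_inner_le_norm _ _)
      (mul_le_mul_of_nonneg_right (hM (g j)) (norm_nonneg _))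
  let F : E →L[ℝ] ℝ :=
    LinearMap.mkContinuous ⟨⟨f, f_add⟩, fun a y => by simpa using f_smul a y⟩ M
      (fun y => by simpa [Real.norm_eq_abs] using f_bound y)
  refine ⟨g, hg, (InnerProductSpace.toDual ℝ E).symm F, fun y => ?_⟩
  have hx : ⟪(InnerProductSpace.toDual ℝ E).symm F, y⟫_ℝ = F y :=
    InnerProductSpace.toDual_symm_apply
  rw [hx]
  exact hf y

/-- Discrete elliptic compactness: if `(φ_h)` satisfies
`‖∇φ_h‖² + α²‖Δʰφ_h‖² ≤ C` uniformly, then along a subsequence `φ_h ⇀ φ`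
weakly in `H¹₀`, `Δʰφ_h ⇀ Δφ` weakly in `L²` (so `φ ∈ H² ∩ H¹₀`), and
`φ_h → φ` strongly in `H¹₀`.

Abstract formulation: `H1` is the space `H¹₀(D)ᵈ` with the gradient inner
product, `L2` the space `L²(D)ᵈ`, `ι : H1 → L2` the (compact) embedding,
`Vh s ⊆ H1` the finite element spaces, `Dseq j = Δʰφ_{h j}` the discrete
Laplacians characterized by `(Δʰz, w)_{L²} = −(∇z, ∇w)` for `w ∈ V_h`; the
density hypothesis encodes the approximation property of the `L²`-projections,
and the limit identity `(z, ιw)_{L²} = −(φ, w)_{H¹}` expresses `z = Δφ` with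
`φ ∈ H² ∩ H¹₀`. -/
theorem stmt_16 {H1 L2 : Type*}
    [NormedAddCommGroup H1] [InnerProductSpace ℝ H1] [CompleteSpace H1]
    [NormedAddCommGroup L2] [InnerProductSpace ℝ L2] [CompleteSpace L2]
    (ι : H1 →L[ℝ] L2) (hι : Function.Injective ι)
    -- compactness of the embedding `H¹₀ ↪ L²`
    (hcompact : ∀ (ψ : ℕ → H1) (C : ℝ), (∀ j, ‖ψ j‖ ≤ C) →
      ∃ g : ℕ → ℕ, StrictMono g ∧ ∃ y : L2,
        Tendsto (fun j => ι (ψ (g j))) atTop (nhds y))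
    (h : ℕ → ℝ) (hh : ∀ j, 0 < h j) (hh0 : Tendsto h atTop (nhds 0))
    (Vh : ℝ → Submodule ℝ H1)
    (α : ℝ) (hα : 0 < α)
    (φseq : ℕ → H1) (hφmem : ∀ j, φseq j ∈ Vh (h j))
    (Dseq : ℕ → L2)
    -- `Dseq j` is the discrete Laplacian `Δʰφ_{h j}`
    (hD : ∀ j, ∀ w ∈ Vh (h j), ⟪Dseq j, ι w⟫_ℝ = -⟪φseq j, w⟫_ℝ)
    -- uniform bound `‖∇φ_h‖² + α²‖Δʰφ_h‖² ≤ C`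
    (C : ℝ) (hbound : ∀ j, ‖φseq j‖ ^ 2 + α ^ 2 * ‖Dseq j‖ ^ 2 ≤ C)
    -- approximation property of the finite element spaces
    (hdense : ∀ w : H1, ∃ wh : ℕ → H1, (∀ j, wh j ∈ Vh (h j)) ∧
      Tendsto (fun j => ‖wh j - w‖) atTop (nhds 0)) :
    ∃ (g : ℕ → ℕ) (φ : H1) (z : L2), StrictMono g ∧
      (∀ w : H1, Tendsto (fun j => ⟪φseq (g j), w⟫_ℝ) atTop (nhds ⟪φ, w⟫_ℝ)) ∧
      (∀ y : L2, Tendsto (fun j => ⟪Dseq (g j), y⟫_ℝ) atTop (nhds ⟪z, y⟫_ℝ)) ∧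
      (∀ w : H1, ⟪z, ι w⟫_ℝ = -⟪φ, w⟫_ℝ) ∧
      Tendsto (fun j => ‖φseq (g j) - φ‖) atTop (nhds 0) := by
  -- bounds
  have hC0 : 0 ≤ C := le_trans (by positivity) (hbound 0)
  set Mφ : ℝ := Real.sqrt C with hMφ
  set MD : ℝ := Real.sqrt C / α with hMD
  have hMφ0 : 0 ≤ Mφ := Real.sqrt_nonneg C
  have hMD0 : 0 ≤ MD := div_nonneg (Real.sqrt_nonneg C) hα.le
  have hφb : ∀ j, ‖φseq j‖ ≤ Mφ := by
    intro j
    rw [hMφ, Real.le_sqrt (norm_nonneg _) hC0]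
    nlinarith [hbound j, sq_nonneg ‖Dseq j‖, sq_nonneg α]
  have hDb : ∀ j, ‖Dseq j‖ ≤ MD := by
    intro j
    rw [hMD, le_div_iff₀ hα]
    rw [← Real.sqrt_sq (by positivity : (0:ℝ) ≤ ‖Dseq j‖ * α)]
    refine Real.sqrt_le_sqrt ?_
    nlinarith [hbound j, sq_nonneg ‖φseq j‖]
  -- step 1: strong L2 compactness
  obtain ⟨g₀, hg₀, y, hy⟩ := hcompact φseq Mφ hφb
  -- step 2: weak limit of φseq
  obtain ⟨g₁, hg₁, φ, hφw⟩ := weak_seq_compact (fun j => φseq (g₀ j)) Mφ (fun j => hφb _)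
  -- step 3: weak limit of Dseq
  obtain ⟨g₂, hg₂, z, hzw⟩ :=
    weak_seq_compact (fun j => Dseq (g₀ (g₁ j))) MD (fun j => hDb _)
  set g : ℕ → ℕ := fun j => g₀ (g₁ (g₂ j)) with hgdef
  have hg : StrictMono g := hg₀.comp (hg₁.comp hg₂)
  have hφw' : ∀ w : H1, Tendsto (fun j => ⟪φseq (g j), w⟫_ℝ) atTop (nhds ⟪φ, w⟫_ℝ) :=
    fun w => ((hφw w).comp (hg₂.tendsto_atTop)).congr (fun j => rfl)
  have hzw' : ∀ v : L2, Tendsto (fun j => ⟪Dseq (g j), v⟫_ℝ) atTop (nhds ⟪z, v⟫_ℝ) :=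
    fun v => hzw v
  have hstrong : Tendsto (fun j => ι (φseq (g j))) atTop (nhds y) :=
    (hy.comp ((hg₁.comp hg₂).tendsto_atTop)).congr (fun j => rfl)
  -- the limit identity
  have hident : ∀ w : H1, ⟪z, ι w⟫_ℝ = -⟪φ, w⟫_ℝ := by
    intro w
    obtain ⟨wh, hwhmem, hwh⟩ := hdense w
    have hwh' : Tendsto (fun j => ‖wh (g j) - w‖) atTop (nhds 0) :=
      (hwh.comp hg.tendsto_atTop).congr (fun j => rfl)
    have e1 : Tendsto (fun j => ⟪Dseq (g j), ι (w - wh (g j))⟫_ℝ) atTop (nhds 0) := by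
      refine squeeze_zero_norm (a := fun j => MD * ‖ι‖ * ‖wh (g j) - w‖) (fun j => ?_) ?_
      · rw [Real.norm_eq_abs]
        refine le_trans (abs_real_inner_le_norm _ _) ?_
        have h1 : ‖ι (w - wh (g j))‖ ≤ ‖ι‖ * ‖wh (g j) - w‖ := by
          rw [show w - wh (g j) = -(wh (g j) - w) from (neg_sub _ _).symm, map_neg, norm_neg]
          exact ι.le_opNorm _
        calc ‖Dseq (g j)‖ * ‖ι (w - wh (g j))‖ ≤ MD * (‖ι‖ * ‖wh (g j) - w‖) :=
              mul_le_mul (hDb _) h1 (norm_nonneg _) hMD0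
          _ = MD * ‖ι‖ * ‖wh (g j) - w‖ := by ring
      · simpa using hwh'.const_mul (MD * ‖ι‖)
    have e2 : Tendsto (fun j => ⟪φseq (g j), wh (g j) - w⟫_ℝ) atTop (nhds 0) := by
      refine squeeze_zero_norm (a := fun j => Mφ * ‖wh (g j) - w‖) (fun j => ?_) ?_
      · rw [Real.norm_eq_abs]
        exact le_trans (abs_real_inner_le_norm _ _)
          (mul_le_mul_of_nonneg_right (hφb _) (norm_nonneg _))
      · simpa using hwh'.const_mul Mφ
    have key : Tendsto (fun j => ⟪Dseq (g j), ι w⟫_ℝ) atTop (nhds (0 - 0 + -⟪φ, w⟫_ℝ)) := by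
      refine Tendsto.congr (f₁ := fun j =>
        ⟪Dseq (g j), ι (w - wh (g j))⟫_ℝ - ⟪φseq (g j), wh (g j) - w⟫_ℝ
          + -⟪φseq (g j), w⟫_ℝ) (fun j => ?_) (((e1.sub e2).add (hφw' w).neg))
      have hDj := hD (g j) (wh (g j)) (hwhmem (g j))
      simp only [map_sub, inner_sub_right, hDj]
      ring
    have := hzw' (ι w)
    have hlim := tendsto_nhds_unique this key
    rw [hlim]; ring
  -- identify y = ι φ
  have hyφ : y = ι φ := by
    have hv : ∀ v : L2, ⟪y - ι φ, v⟫_ℝ = 0 := by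
      intro v
      have h1 : Tendsto (fun j => ⟪ι (φseq (g j)), v⟫_ℝ) atTop (nhds ⟪y, v⟫_ℝ) :=
        hstrong.inner tendsto_const_nhds
      have h2 : Tendsto (fun j => ⟪ι (φseq (g j)), v⟫_ℝ) atTop (nhds ⟪ι φ, v⟫_ℝ) := by
        have h3 := hφw' (ContinuousLinearMap.adjoint ι v)
        have h4 : ∀ j, ⟪φseq (g j), ContinuousLinearMap.adjoint ι v⟫_ℝ
            = ⟪ι (φseq (g j)), v⟫_ℝ :=
          fun j => ContinuousLinearMap.adjoint_inner_right ι _ v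
        rw [← ContinuousLinearMap.adjoint_inner_right ι φ v]
        exact h3.congr h4
      have := tendsto_nhds_unique h1 h2
      rw [inner_sub_left, this, sub_self]
    have := hv (y - ι φ)
    rwa [inner_self_eq_zero, sub_eq_zero] at this
  have hstrong' : Tendsto (fun j => ι (φseq (g j))) atTop (nhds (ι φ)) := hyφ ▸ hstrong
  -- strong convergence in H1
  have hnorm2 : Tendsto (fun j => ‖φseq (g j)‖ ^ 2) atTop (nhds (‖φ‖ ^ 2)) := by
    have hA : Tendsto (fun j => ⟪Dseq (g j), ι (φseq (g j)) - ι φ⟫_ℝ) atTop (nhds 0) := by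
      refine squeeze_zero_norm (a := fun j => MD * ‖ι (φseq (g j)) - ι φ‖) (fun j => ?_) ?_
      · rw [Real.norm_eq_abs]
        exact le_trans (abs_real_inner_le_norm _ _)
          (mul_le_mul_of_nonneg_right (hDb _) (norm_nonneg _))
      · simpa using (tendsto_iff_norm_sub_tendsto_zero.mp hstrong').const_mul MD
    have hB : Tendsto (fun j => ⟪Dseq (g j), ι (φseq (g j))⟫_ℝ) atTop
        (nhds (0 + ⟪z, ι φ⟫_ℝ)) := by
      refine Tendsto.congr (fun j => ?_) (hA.add (hzw' (ι φ)))
      rw [inner_sub_right]; ring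
    have hval : ∀ j, ‖φseq (g j)‖ ^ 2 = -⟪Dseq (g j), ι (φseq (g j))⟫_ℝ := by
      intro j
      rw [hD (g j) (φseq (g j)) (hφmem (g j)), neg_neg, real_inner_self_eq_norm_sq]
    have : Tendsto (fun j => -⟪Dseq (g j), ι (φseq (g j))⟫_ℝ) atTop
        (nhds (-(0 + ⟪z, ι φ⟫_ℝ))) := hB.neg
    have hlim : -(0 + ⟪z, ι φ⟫_ℝ) = ‖φ‖ ^ 2 := by
      rw [hident φ, real_inner_self_eq_norm_sq]; ring
    rw [hlim] at this
    exact this.congr (fun j => (hval j).symm)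
  have hsq : Tendsto (fun j => ‖φseq (g j) - φ‖ ^ 2) atTop (nhds 0) := by
    have h1 : Tendsto (fun j => ‖φseq (g j)‖ ^ 2 - 2 * ⟪φseq (g j), φ⟫_ℝ + ‖φ‖ ^ 2) atTop
        (nhds (‖φ‖ ^ 2 - 2 * ⟪φ, φ⟫_ℝ + ‖φ‖ ^ 2)) :=
      (hnorm2.sub ((hφw' φ).const_mul 2)).add tendsto_const_nhds
    have h2 : ‖φ‖ ^ 2 - 2 * ⟪φ, φ⟫_ℝ + ‖φ‖ ^ 2 = 0 := by
      rw [real_inner_self_eq_norm_sq]; ring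
    rw [h2] at h1
    exact h1.congr (fun j => (norm_sub_sq_real _ _).symm)
  refine ⟨g, φ, z, hg, hφw', hzw', hident, ?_⟩
  have h5 : ∀ j, Real.sqrt (‖φseq (g j) - φ‖ ^ 2) = ‖φseq (g j) - φ‖ :=
    fun j => Real.sqrt_sq (norm_nonneg _)
  have h6 : Tendsto (fun j => Real.sqrt (‖φseq (g j) - φ‖ ^ 2)) atTop (nhds (Real.sqrt 0)) :=
    ((Real.continuous_sqrt.tendsto 0).comp hsq).congr (fun j => rfl)
  rw [Real.sqrt_zero] at h6
  exact h6.congr h5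
end
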